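/- With ψ as above (homeomorphism invariant, finitely additive, and ψ((0,1] × (0,1)^n) = 0 for all n ≥ 0), one has ψ(ℝ^n) = (-1)^n · ψ({pt}) for every n ≥ 0, where ψ(ℝ^n) means ψ evaluated on any set homeomorphic to ℝ^n. -/

import Mathlib

open Set

/-- The open interval `(0,1)` is homeomorphic to `ℝ`. -/
noncomputable def affHomeo : ℝ ≃ₜ ℝ :=
  (Homeomorph.addRight (1:ℝ)).trans (Homeomorph.mulRight₀ (2⁻¹:ℝ) (by norm_num))

lemma affHomeo_apply (x : ℝ) : affHomeo x = (x + 1) * 2⁻¹ := rfl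

/-- The open interval `(0,1)` is homeomorphic to `ℝ`. -/
noncomputable def iooRealHomeo : ↥(Ioo (0:ℝ) 1) ≃ₜ ℝ := by
  have h : ℝ ≃o Ioo (-1 : ℝ) 1 := orderIsoIooNegOneOne ℝ
  have himg : affHomeo '' Ioo (-1:ℝ) 1 = Ioo 0 1 := by
    ext x
    constructor
    · rintro ⟨y, ⟨hy1, hy2⟩, rfl⟩
      rw [affHomeo_apply]
      constructor <;> nlinarith
    · rintro ⟨hx1, hx2⟩
      exact ⟨2 * x - 1, ⟨by linarith, by linarith⟩, by rw [affHomeo_apply]; ring⟩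
  exact ((Homeomorph.setCongr himg).symm.trans (affHomeo.image (Ioo (-1:ℝ) 1)).symm).trans
    h.toHomeomorph.symm

/-- `univ.pi s` is homeomorphic to the product of the `s i`. -/
def univPiHomeo {ι : Type*} {X : ι → Type*} [∀ i, TopologicalSpace (X i)] (s : ∀ i, Set (X i)) :
    ↥(univ.pi s) ≃ₜ ∀ i, ↥(s i) where
  toEquiv := Equiv.Set.univPi s
  continuous_toFun := continuous_pi fun i =>
    ((continuous_apply i).comp continuous_subtype_val).subtype_mk _
  continuous_invFun := (continuous_pi fun i =>
    continuous_subtype_val.comp (continuous_apply i)).subtype_mk _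

/-- `Fin n` is equivalent to the nonzero elements of `Fin (n+1)`. -/
def finSuccNe (n : ℕ) : Fin n ≃ {j : Fin (n+1) // j ≠ 0} where
  toFun i := ⟨i.succ, Fin.succ_ne_zero i⟩
  invFun j := j.1.pred j.2
  left_inv i := by simp
  right_inv j := by ext; simp

/-- The "face" `{1} × (0,1)^n` is homeomorphic to `ℝ^n`. -/
noncomputable def faceHomeo (n : ℕ) :
    ↥{x : Fin (n+1) → ℝ | x 0 = 1 ∧ ∀ i : Fin (n+1), i ≠ 0 → x i ∈ Ioo (0:ℝ) 1}
      ≃ₜ (Fin n → ℝ) := by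
  have e1 : ↥{x : Fin (n+1) → ℝ | x 0 = 1 ∧ ∀ i : Fin (n+1), i ≠ 0 → x i ∈ Ioo (0:ℝ) 1}
      ≃ₜ ({j : Fin (n+1) // j ≠ 0} → ↥(Ioo (0:ℝ) 1)) := by
    refine Homeomorph.mk ⟨fun x j => ⟨x.1 j.1, x.2.2 j.1 j.2⟩,
      fun g => ⟨fun i => if h : i = 0 then 1 else (g ⟨i, h⟩).1, ?_, ?_⟩, ?_, ?_⟩ ?_ ?_
    · simp
    · intro i hi
      simp only [hi, dif_neg, not_false_iff]; exact (g ⟨i, hi⟩).2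
    · rintro ⟨x, hx0, hx⟩
      ext i
      by_cases h : i = 0
      · simp [h, hx0]
      · simp [h]
    · intro g
      ext j
      simp [j.2]
    · exact continuous_pi fun j =>
        ((continuous_apply j.1).comp continuous_subtype_val).subtype_mk _
    · refine Continuous.subtype_mk (continuous_pi fun i => ?_) _
      by_cases h : i = 0
      · simpa [h] using continuous_const
      · simpa [h, Function.comp_def] using continuous_subtype_val.comp (continuous_apply (⟨i, h⟩ : {j : Fin (n+1) // j ≠ 0}))
  exact (e1.trans (Homeomorph.piCongrRight fun _ => iooRealHomeo)).trans
    (Homeomorph.piCongrLeft (Y := fun _ : {j : Fin (n+1) // j ≠ 0} => ℝ) (finSuccNe n)).symm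

/-- For `ψ` homeomorphism invariant, finitely additive, with
`ψ((0,1] × (0,1)^n) = 0` for all `n ≥ 0`, one has `ψ(ℝ^n) = (-1)^n ψ({pt})`,
where `ψ(ℝ^n)` means `ψ` evaluated on any set homeomorphic to `ℝ^n`
(and the point is `ℝ^0`). -/
theorem stmt4 (ψ : (n : ℕ) → Set (Fin n → ℝ) → ℝ)
    (hinv : ∀ (m n : ℕ) (A : Set (Fin m → ℝ)) (B : Set (Fin n → ℝ)),
      Nonempty (↥A ≃ₜ ↥B) → ψ m A = ψ n B)
    (hadd : ∀ (n : ℕ) (A B : Set (Fin n → ℝ)),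
      Disjoint A B → ψ n (A ∪ B) = ψ n A + ψ n B)
    (hzero : ∀ n : ℕ,
      ψ (n + 1) {x : Fin (n + 1) → ℝ |
        x 0 ∈ Set.Ioc (0 : ℝ) 1 ∧ ∀ i : Fin (n + 1), i ≠ 0 → x i ∈ Set.Ioo (0 : ℝ) 1} = 0) :
    ∀ (m n : ℕ) (A : Set (Fin m → ℝ)), Nonempty (↥A ≃ₜ (Fin n → ℝ)) →
      ψ m A = (-1 : ℝ) ^ n * ψ 0 Set.univ := by
  -- first: the universe statement by induction
  have key : ∀ n : ℕ, ψ n univ = (-1 : ℝ) ^ n * ψ 0 univ := by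
    intro n
    induction n with
    | zero => simp
    | succ n ih =>
      set S : Set (Fin (n+1) → ℝ) := {x | x 0 ∈ Ioc (0:ℝ) 1 ∧
        ∀ i : Fin (n+1), i ≠ 0 → x i ∈ Ioo (0:ℝ) 1} with hS
      set C : Set (Fin (n+1) → ℝ) := univ.pi (fun _ => Ioo (0:ℝ) 1) with hC
      set B : Set (Fin (n+1) → ℝ) := {x | x 0 = 1 ∧
        ∀ i : Fin (n+1), i ≠ 0 → x i ∈ Ioo (0:ℝ) 1} with hB
      have hunion : S = C ∪ B := by
        ext x
        constructor
        · rintro ⟨⟨h01, h1le⟩, hrest⟩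
          by_cases h : x 0 = 1
          · exact Or.inr ⟨h, hrest⟩
          · refine Or.inl (fun i _ => ?_)
            by_cases hi : i = 0
            · subst hi; exact ⟨h01, lt_of_le_of_ne h1le h⟩
            · exact hrest i hi
        · rintro (hp | ⟨hb0, hb⟩)
          · exact ⟨⟨(hp 0 trivial).1, le_of_lt (hp 0 trivial).2⟩, fun i hi => hp i trivial⟩
          · exact ⟨by rw [hb0]; exact ⟨one_pos, le_refl 1⟩, hb⟩
      have hdisj : Disjoint C B := by
        rw [Set.disjoint_left]
        rintro x hx ⟨hb0, -⟩
        exact absurd hb0 (ne_of_lt (hx 0 trivial).2)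
      have hψC : ψ (n+1) C = ψ (n+1) univ := by
        refine hinv _ _ _ _ ⟨?_⟩
        exact ((univPiHomeo _).trans (Homeomorph.piCongrRight fun _ => iooRealHomeo)).trans
          (Homeomorph.Set.univ _).symm
      have hψB : ψ (n+1) B = ψ n univ := by
        refine hinv _ _ _ _ ⟨?_⟩
        exact (faceHomeo n).trans (Homeomorph.Set.univ _).symm
      have h0 : ψ (n+1) S = 0 := hzero n
      rw [hunion, hadd _ _ _ hdisj, hψC, hψB, ih] at h0
      rw [pow_succ]
      linarith
  intro m n A ⟨e⟩
  rw [hinv m n A univ ⟨e.trans (Homeomorph.Set.univ _).symm⟩]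
  exact key n
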